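/- Let ε and ε⋆ be Hermitian involutions with trace ε = 2ν and trace ε⋆ = 2ν⋆. If ν ≠ ν⋆, then 1 + εε⋆ is not invertible. -/

import Mathlib

open Matrix

/-- If ε and ε⋆ are Hermitian involutions with trace ε = 2ν, trace ε⋆ = 2ν⋆ and
ν ≠ ν⋆, then 1 + εε⋆ is not invertible. -/
theorem stmt7 {N : ℕ} (ε εs : Matrix (Fin (2 * N)) (Fin (2 * N)) ℂ)
    (hεH : εᴴ = ε) (hε2 : ε * ε = 1)
    (hεsH : εsᴴ = εs) (hεs2 : εs * εs = 1)
    (ν νs : ℤ) (htr : ε.trace = (2 * ν : ℤ)) (htrs : εs.trace = (2 * νs : ℤ))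
    (hne : ν ≠ νs) :
    ¬ IsUnit (1 + ε * εs) := by
  intro h
  set A : Matrix (Fin (2 * N)) (Fin (2 * N)) ℂ := ε + εs with hA
  have hεunit : IsUnit ε := Matrix.isUnit_iff_isUnit_det ε |>.mpr (IsUnit.of_mul_eq_one _ (by rw [← Matrix.det_mul, hε2, Matrix.det_one]))
  have hAeq : A = ε * (1 + ε * εs) := by
    rw [hA, mul_add, mul_one, ← mul_assoc, hε2, one_mul]
  have hAunit : IsUnit A := by rw [hAeq]; exact hεunit.mul h
  -- intertwining: ε * A = A * εs
  have hint : ε * A = A * εs := by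
    rw [hA, mul_add, add_mul, hε2, hεs2, add_comm]
  obtain ⟨u, hu⟩ := hAunit
  set B : Matrix (Fin (2 * N)) (Fin (2 * N)) ℂ := ↑u⁻¹ with hB
  have hu1 : A * B = 1 := by rw [hB, ← hu]; exact u.mul_inv
  have hu2 : B * A = 1 := by rw [hB, ← hu]; exact u.inv_mul
  have hεconj : ε = A * εs * B := by
    have h2 : ε * A * B = A * εs * B := by rw [hint]
    rwa [mul_assoc, hu1, mul_one] at h2
  have htreq : ε.trace = εs.trace := by
    rw [hεconj, mul_assoc, Matrix.trace_mul_comm, mul_assoc, hu2, mul_one]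
  rw [htr, htrs] at htreq
  have : (ν : ℂ) = νs := by
    simp at htreq
    exact_mod_cast htreq
  exact hne (by exact_mod_cast this)
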